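/- For the monochromatic complete bipartite graph K_{m,n} with m ≥ n ≥ 2 and m + n ≥ 9: pc_opt(K_{m,n}) = 4 if n ∈ {2,3}, and pc_opt(K_{m,n}) = 5 if n ≥ 4. -/

import Mathlib

open SimpleGraph

/-- A walk is properly colored: no two consecutive edges share a color. -/
def ProperWalk {V : Type*} {G : SimpleGraph V} (c : Sym2 V → ℕ) {u v : V} (p : G.Walk u v) : Prop :=
  (p.edges.map c).Chain' (· ≠ ·)

/-- An edge-colored graph is properly connected. -/
def ProperlyConnected {V : Type*} (G : SimpleGraph V) (c : Sym2 V → ℕ) : Prop :=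
  ∀ u v : V, u ≠ v → ∃ p : G.Walk u v, p.IsPath ∧ ProperWalk c p

/-- Number of edges recolored away from the base color 0. -/
noncomputable def numRecolored {V : Type*} (G : SimpleGraph V) (c : Sym2 V → ℕ) : ℕ :=
  {e | e ∈ G.edgeSet ∧ c e ≠ 0}.ncard

/-- Number of new colors used. -/
noncomputable def numNewColors {V : Type*} (G : SimpleGraph V) (c : Sym2 V → ℕ) : ℕ :=
  (c '' {e | e ∈ G.edgeSet ∧ c e ≠ 0}).ncard

/-- Optimal proper connection number: minimum of p + q. -/
noncomputable def pcOpt {V : Type*} (G : SimpleGraph V) : ℕ :=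
  sInf { n | ∃ c : Sym2 V → ℕ, ProperlyConnected G c ∧
    n = numRecolored G c + numNewColors G c }


lemma altOdd (a : ℕ) : ∀ L : List ℕ, L.Chain' (· ≠ ·) → (∀ x ∈ L, x = 0 ∨ x = a) →
    L.head? = some 0 → L.getLast? = some 0 → Odd L.length
  | [], _, _, hh, _ => by simp at hh
  | [x], _, _, hh, _ => by simp
  | [x, y], hc, hm, hh, hl => by
      simp [List.Chain'] at hh hl hc; omega
  | (x :: y :: z :: t), hc, hm, hh, hl => by
      simp only [List.head?_cons, Option.some.injEq] at hh
      subst hh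
      unfold List.Chain' at hc; rw [List.isChain_cons_cons] at hc
      obtain ⟨hxy, hc⟩ := hc
      rw [List.isChain_cons_cons] at hc
      obtain ⟨hyz, hc2⟩ := hc
      have hy : y = a := by
        rcases hm y (by simp) with h | h
        · exact absurd h.symm hxy
        · exact h
      have hz : z = 0 := by
        rcases hm z (by simp) with h | h
        · exact h
        · rw [hy] at hyz; exact absurd h.symm hyz
      have ih : Odd (z :: t).length := by
        refine altOdd a (z :: t) hc2
          (fun x hx => hm x (List.mem_cons_of_mem _ (List.mem_cons_of_mem _ hx)))
          (by simp [hz]) ?_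
        rw [List.getLast?_cons_cons, List.getLast?_cons_cons] at hl
        exact hl
      simp only [List.length_cons] at ih ⊢
      obtain ⟨k, hk⟩ := ih
      exact ⟨k + 1, by omega⟩

/-- zeros are at most nonzeros + 1 in a ≠-chain -/
lemma zeroCount : ∀ L : List ℕ, L.Chain' (· ≠ ·) →
    (L.countP (· == 0) ≤ L.countP (· != 0) + 1 ∧
     (∀ x L', L = x :: L' → x ≠ 0 → L.countP (· == 0) ≤ L.countP (· != 0)))
  | [] => by intro _; constructor <;> simp
  | x :: t => by
      intro hc
      unfold List.Chain' at hc; rw [List.isChain_cons] at hc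
      obtain ⟨hhd, hct⟩ := hc
      have IH := zeroCount t hct
      by_cases hx : x = 0
      · subst hx
        refine ⟨?_, ?_⟩
        · rcases t with _ | ⟨y, t'⟩
          · simp
          · have hy : y ≠ 0 := by
              intro h; exact hhd y rfl (by rw [h])
            have h2 := IH.2 y t' rfl hy
            have e1 : (y == 0) = false := by simp [hy]
            have e2 : (y != 0) = true := by simp [hy]
            simp [List.countP_cons, e1, e2] at h2 ⊢
            omega
        · intro x L' hE hne; injection hE with h1 _; exact absurd h1.symm hne
      · have h2 : ∀ y L', x :: t = y :: L' → y ≠ 0 →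
            (x::t).countP (· == 0) ≤ (x::t).countP (· != 0) := by
          intro y L' hE hy
          have e1 : (x == 0) = false := by simp [hx]
          have e2 : (x != 0) = true := by simp [hx]
          have := IH.1
          simp [List.countP_cons, e1, e2]
          omega
        exact ⟨le_trans (h2 x t rfl hx) (by omega), h2⟩

/-- nonzero entries all in {a,b} gives a bound on nonzero count -/
lemma nzBound (a b : ℕ) : ∀ L : List ℕ, (∀ x ∈ L, x ≠ 0 → x = a ∨ x = b) →
    L.countP (· != 0) ≤ L.countP (· == a) + L.countP (· == b)
  | [] => by simp
  | x :: t => by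
      intro hm
      have IH := nzBound a b t (fun y hy => hm y (List.mem_cons_of_mem _ hy))
      simp only [List.countP_cons]
      by_cases hx : x = 0
      · simp [hx]; omega
      · rcases hm x List.mem_cons_self hx with h | h <;>
          simp [h, hx] <;> split_ifs <;> omega

lemma lenSplit (L : List ℕ) : L.length = L.countP (· == 0) + L.countP (· != 0) := by
  have := List.length_eq_countP_add_countP (· == 0) (l := L)
  rw [this]
  congr 1
  apply List.countP_congr
  intro x _
  cases h : (x == 0) <;> simp_all

/-- a nodup list where P holds only for x0 has at most one P element -/
lemma countP_le_one {α : Type*} (P : α → Bool) (x0 : α) : ∀ (E : List α), E.Nodup →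
    (∀ e ∈ E, P e → e = x0) → E.countP P ≤ 1
  | [] => by simp
  | e :: t => by
      intro hnd hP
      have hnd' := hnd.of_cons
      have ht : ∀ f ∈ t, P f → f = x0 := fun f hf => hP f (List.mem_cons_of_mem _ hf)
      have IH := countP_le_one P x0 t hnd' ht
      simp only [List.countP_cons]
      by_cases he : P e
      · have he0 : e = x0 := hP e List.mem_cons_self he
        have : t.countP P = 0 := by
          rw [List.countP_eq_zero]
          intro f hf hPf
          have : f = x0 := ht f hf hPf
          subst this he0
          exact (List.nodup_cons.mp hnd).1 hf
        simp [he, this]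
      · simp [he]; omega
open SimpleGraph



lemma adj_isLeft {m n : ℕ} {u v : Fin m ⊕ Fin n}
    (h : (completeBipartiteGraph (Fin m) (Fin n)).Adj u v) : u.isLeft = !v.isLeft := by
  cases u <;> cases v <;> simp_all

lemma walk_parity {m n : ℕ} {u v : Fin m ⊕ Fin n}
    (w : (completeBipartiteGraph (Fin m) (Fin n)).Walk u v) :
    (u.isLeft = v.isLeft ↔ Even w.length) := by
  induction w with
  | nil => simp
  | cons h p ih =>
    rename_i a b d
    have := adj_isLeft h
    simp only [SimpleGraph.Walk.length_cons, Nat.even_add_one, ← ih, this]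
    cases b.isLeft <;> cases d.isLeft <;> simp

lemma edge_form {m n : ℕ} {e : Sym2 (Fin m ⊕ Fin n)}
    (he : e ∈ (completeBipartiteGraph (Fin m) (Fin n)).edgeSet) :
    ∃ i j, e = s(Sum.inl i, Sum.inr j) := by
  induction e with
  | _ p q =>
    rw [SimpleGraph.mem_edgeSet] at he
    cases p with
    | inl i => cases q with
      | inl i' => simp at he
      | inr j => exact ⟨i, j, rfl⟩
    | inr j => cases q with
      | inl i => exact ⟨i, j, Sym2.eq_swap⟩
      | inr j' => simp at he

lemma first_color {V : Type*} {G : SimpleGraph V} (c : Sym2 V → ℕ) {u v : V}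
    (w : G.Walk u v) (hne : u ≠ v) (hu : ∀ x, G.Adj u x → c s(u, x) = 0) :
    (w.edges.map c).head? = some 0 := by
  cases w with
  | nil => exact absurd rfl hne
  | cons h p => simp [hu _ h]

lemma last_color {V : Type*} {G : SimpleGraph V} (c : Sym2 V → ℕ) {u v : V}
    (w : G.Walk u v) (hne : u ≠ v) (hv : ∀ x, G.Adj v x → c s(v, x) = 0) :
    (w.edges.map c).getLast? = some 0 := by
  have := first_color c w.reverse (Ne.symm hne) hv
  rwa [SimpleGraph.Walk.edges_reverse, List.map_reverse, List.head?_reverse] at this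



lemma touched_card {m n : ℕ} (R : Set (Sym2 (Fin m ⊕ Fin n)))
    (hR : R ⊆ (completeBipartiteGraph (Fin m) (Fin n)).edgeSet) (side : Bool) :
    {x : Fin m ⊕ Fin n | x.isLeft = side ∧ ∃ e ∈ R, x ∈ e}.ncard ≤ R.ncard := by
  classical
  set T := {x : Fin m ⊕ Fin n | x.isLeft = side ∧ ∃ e ∈ R, x ∈ e} with hT
  refine Set.ncard_le_ncard_of_injOn
    (fun x => if h : ∃ e ∈ R, x ∈ e then h.choose else s(x, x)) ?_ ?_ (Set.toFinite R)
  · rintro x ⟨hxs, hx⟩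
    simp only [dif_pos hx]
    exact hx.choose_spec.1
  · rintro x ⟨hxs, hx⟩ y ⟨hys, hy⟩ hxy
    simp only [dif_pos hx, dif_pos hy] at hxy
    have h1 : x ∈ hx.choose := hx.choose_spec.2
    have h2 : y ∈ hx.choose := hxy ▸ hy.choose_spec.2
    obtain ⟨i, j, hij⟩ := edge_form (hR hx.choose_spec.1)
    rw [hij, Sym2.mem_iff] at h1 h2
    cases side
    · rcases h1 with h1 | h1 <;> rcases h2 with h2 | h2 <;>
        subst_vars <;> simp_all
    · rcases h1 with h1 | h1 <;> rcases h2 with h2 | h2 <;>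
        subst_vars <;> simp_all

lemma side_card {m n : ℕ} (side : Bool) :
    {x : Fin m ⊕ Fin n | x.isLeft = side}.ncard = if side then m else n := by
  cases side
  · have : {x : Fin m ⊕ Fin n | x.isLeft = false} = Set.range Sum.inr := by
      ext x; cases x <;> simp
    rw [this, ← Nat.card_coe_set_eq, Nat.card_range_of_injective Sum.inr_injective]
    simp
  · have : {x : Fin m ⊕ Fin n | x.isLeft = true} = Set.range Sum.inl := by
      ext x; cases x <;> simp
    rw [this, ← Nat.card_coe_set_eq, Nat.card_range_of_injective Sum.inl_injective]
    simp

lemma exists_untouched_pair {m n : ℕ} (R : Set (Sym2 (Fin m ⊕ Fin n)))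
    (hR : R ⊆ (completeBipartiteGraph (Fin m) (Fin n)).edgeSet) (side : Bool)
    (hcard : R.ncard + 2 ≤ if side then m else n) :
    ∃ u v : Fin m ⊕ Fin n, u ≠ v ∧ u.isLeft = side ∧ v.isLeft = side ∧
      (∀ e ∈ R, u ∉ e) ∧ (∀ e ∈ R, v ∉ e) := by
  classical
  set S := {x : Fin m ⊕ Fin n | x.isLeft = side} with hS
  set T := {x : Fin m ⊕ Fin n | x.isLeft = side ∧ ∃ e ∈ R, x ∈ e} with hT
  have hTS : T ⊆ S := fun x hx => hx.1
  have h1 : T.ncard ≤ R.ncard := touched_card R hR side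
  have h2 : (S \ T).ncard = S.ncard - T.ncard := Set.ncard_diff hTS (Set.toFinite T)
  have h3 : 1 < (S \ T).ncard := by
    rw [h2, side_card]
    omega
  rw [Set.one_lt_ncard (Set.toFinite _)] at h3
  obtain ⟨u, hu, v, hv, huv⟩ := h3
  refine ⟨u, v, huv, hu.1, hv.1, ?_, ?_⟩
  · intro e he hmem
    exact hu.2 ⟨hu.1, e, he, hmem⟩
  · intro e he hmem
    exact hv.2 ⟨hv.1, e, he, hmem⟩

lemma parity_contra {m n : ℕ} (c : Sym2 (Fin m ⊕ Fin n) → ℕ)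
    (hpc : ProperlyConnected (completeBipartiteGraph (Fin m) (Fin n)) c) (a : ℕ)
    (hall : ∀ e ∈ (completeBipartiteGraph (Fin m) (Fin n)).edgeSet, c e = 0 ∨ c e = a)
    (u v : Fin m ⊕ Fin n) (hne : u ≠ v) (hside : u.isLeft = v.isLeft)
    (hu : ∀ x, (completeBipartiteGraph (Fin m) (Fin n)).Adj u x → c s(u, x) = 0)
    (hv : ∀ x, (completeBipartiteGraph (Fin m) (Fin n)).Adj v x → c s(v, x) = 0) : False := by
  obtain ⟨w, hw, hpw⟩ := hpc u v hne
  have hodd : Odd (w.edges.map c).length := by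
    refine altOdd a _ hpw ?_ (first_color c w hne hu) (last_color c w hne hv)
    intro x hx
    rw [List.mem_map] at hx
    obtain ⟨e, he, rfl⟩ := hx
    exact hall e (w.edges_subset_edgeSet he)
  have heven : Even w.length := (walk_parity w).mp hside
  rw [List.length_map, SimpleGraph.Walk.length_edges] at hodd
  exact (Nat.not_odd_iff_even.mpr heven) hodd

lemma share_vertex {m n : ℕ} (c : Sym2 (Fin m ⊕ Fin n) → ℕ)
    (hpc : ProperlyConnected (completeBipartiteGraph (Fin m) (Fin n)) c)
    (e1 e2 : Sym2 (Fin m ⊕ Fin n))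
    (hRdef : ∀ e ∈ (completeBipartiteGraph (Fin m) (Fin n)).edgeSet, c e ≠ 0 → e = e1 ∨ e = e2)
    (ha : c e1 ≠ 0) (hb : c e2 ≠ 0) (hab : c e1 ≠ c e2)
    (u v : Fin m ⊕ Fin n) (hne : u ≠ v) (hside : u.isLeft = v.isLeft)
    (hu : ∀ x, (completeBipartiteGraph (Fin m) (Fin n)).Adj u x → c s(u, x) = 0)
    (hv : ∀ x, (completeBipartiteGraph (Fin m) (Fin n)).Adj v x → c s(v, x) = 0) :
    ∃ x, x ∈ e1 ∧ x ∈ e2 ∧ x.isLeft = u.isLeft := by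
  obtain ⟨w, hw, hpw⟩ := hpc u v hne
  have hchain : (w.edges.map c).Chain' (· ≠ ·) := hpw
  have hhead : (w.edges.map c).head? = some 0 := first_color c w hne hu
  have hlast : (w.edges.map c).getLast? = some 0 := last_color c w hne hv
  have hmem : ∀ e ∈ w.edges, e ∈ (completeBipartiteGraph (Fin m) (Fin n)).edgeSet :=
    fun e he => w.edges_subset_edgeSet he
  have hcount : ∀ f : Sym2 (Fin m ⊕ Fin n), f = e1 ∨ f = e2 →
      (w.edges.map c).countP (· == c f) ≤ 1 := by
    intro f hf12
    have hf : c f ≠ 0 := by rcases hf12 with rfl | rfl; exacts [ha, hb]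
    rw [List.countP_map]
    refine countP_le_one _ f w.edges hw.edges_nodup ?_
    intro e he hPe
    simp only [Function.comp_apply, beq_iff_eq] at hPe
    have hne0 : c e ≠ 0 := by rw [hPe]; exact hf
    rcases hRdef e (hmem e he) hne0 with rfl | rfl <;> rcases hf12 with rfl | rfl
    · rfl
    · exact absurd hPe hab
    · exact absurd hPe.symm hab
    · rfl
  have hnz : (w.edges.map c).countP (· != 0) ≤ 2 := by
    have h1 := nzBound (c e1) (c e2) (w.edges.map c) ?_
    · have h2 := hcount e1 (Or.inl rfl)
      have h3 := hcount e2 (Or.inr rfl)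
      omega
    · intro x hx hx0
      rw [List.mem_map] at hx
      obtain ⟨e, he, rfl⟩ := hx
      rcases hRdef e (hmem e he) hx0 with rfl | rfl
      · exact Or.inl rfl
      · exact Or.inr rfl
  have hz := (zeroCount (w.edges.map c) hchain).1
  have hlen5 : (w.edges.map c).length ≤ 5 := by
    have := lenSplit (w.edges.map c)
    omega
  have heven : Even w.length := (walk_parity w).mp hside
  have hlenw : (w.edges.map c).length = w.length := by
    rw [List.length_map, SimpleGraph.Walk.length_edges]
  clear hcount hnz hz
  rcases w with _ | ⟨h1, w1⟩
  · exact absurd rfl hne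
  rcases w1 with _ | ⟨h2, w2⟩
  · rw [SimpleGraph.Walk.length_cons, SimpleGraph.Walk.length_nil] at heven
    simp at heven
  rcases w2 with _ | ⟨h3, w3⟩
  · -- length 2 : [0, 0] contradicts chain
    simp only [SimpleGraph.Walk.edges_cons, SimpleGraph.Walk.edges_nil, List.map_cons,
      List.map_nil, List.head?_cons, List.getLast?_cons_cons,
      List.getLast?_singleton] at hhead hlast hchain
    simp only [Option.some.injEq] at hhead hlast
    unfold List.Chain' at hchain; rw [List.isChain_cons_cons] at hchain
    exact absurd (by rw [hhead, hlast]) hchain.1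
  rcases w3 with _ | ⟨h4, w4⟩
  · rw [show (SimpleGraph.Walk.cons h1 (SimpleGraph.Walk.cons h2 (SimpleGraph.Walk.cons h3 SimpleGraph.Walk.nil))).length = 3 by simp] at heven
    exact absurd heven (by decide)
  rcases w4 with _ | ⟨h5, w5⟩
  · -- main case : length 4
    rename_i b1 b2 b3
    simp only [SimpleGraph.Walk.edges_cons, SimpleGraph.Walk.edges_nil, List.map_cons,
      List.map_nil, List.head?_cons, List.getLast?_cons_cons, List.getLast?_singleton] at hhead hlast hchain
    simp only [Option.some.injEq] at hhead hlast
    unfold List.Chain' at hchain; rw [List.isChain_cons_cons, List.isChain_cons_cons, List.isChain_cons_cons] at hchain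
    obtain ⟨hc12, hc23, hc34, -⟩ := hchain
    have h2' : c s(b1, b2) ≠ 0 := fun h0 => hc12 (by rw [hhead, h0])
    have h3' : c s(b2, b3) ≠ 0 := fun h0 => hc34 (by rw [hlast, h0])
    have hm2 := hRdef s(b1, b2) ((SimpleGraph.mem_edgeSet _).mpr h2) h2'
    have hm3 := hRdef s(b2, b3) ((SimpleGraph.mem_edgeSet _).mpr h3) h3'
    have hsd : b2.isLeft = u.isLeft := by
      have e1' := adj_isLeft h1
      have e2' := adj_isLeft h2
      rw [e2'] at e1'
      rw [e1', Bool.not_not]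
    have hb2_1 : b2 ∈ s(b1, b2) := Sym2.mem_mk_right _ _
    have hb2_2 : b2 ∈ s(b2, b3) := Sym2.mem_mk_left _ _
    rcases hm2 with h2e | h2e <;> rcases hm3 with h3e | h3e
    · exact absurd (by rw [h2e, h3e]) hc23
    · exact ⟨b2, h2e ▸ hb2_1, h3e ▸ hb2_2, hsd⟩
    · exact ⟨b2, h3e ▸ hb2_2, h2e ▸ hb2_1, hsd⟩
    · exact absurd (by rw [h2e, h3e]) hc23
  · -- length ≥ 5 impossible
    exfalso
    rw [hlenw] at hlen5
    simp only [SimpleGraph.Walk.length_cons] at hlen5 heven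
    rw [Nat.even_iff] at heven
    omega






lemma untouched_zero {m n : ℕ} (c : Sym2 (Fin m ⊕ Fin n) → ℕ) {u : Fin m ⊕ Fin n}
    (hunt : ∀ e ∈ {e | e ∈ (completeBipartiteGraph (Fin m) (Fin n)).edgeSet ∧ c e ≠ 0}, u ∉ e) :
    ∀ x, (completeBipartiteGraph (Fin m) (Fin n)).Adj u x → c s(u, x) = 0 := by
  intro x hadj
  by_contra h
  exact hunt s(u, x) ⟨(SimpleGraph.mem_edgeSet _).mpr hadj, h⟩ (Sym2.mem_mk_left _ _)

lemma small_colors {m n : ℕ} (c : Sym2 (Fin m ⊕ Fin n) → ℕ)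
    (hq : numNewColors (completeBipartiteGraph (Fin m) (Fin n)) c ≤ 1) :
    ∃ a, ∀ e ∈ (completeBipartiteGraph (Fin m) (Fin n)).edgeSet, c e = 0 ∨ c e = a := by
  rw [numNewColors] at hq
  set R := {e | e ∈ (completeBipartiteGraph (Fin m) (Fin n)).edgeSet ∧ c e ≠ 0} with hR
  rcases (c '' R).eq_empty_or_nonempty with hemp | ⟨a, ha⟩
  · refine ⟨0, fun e he => ?_⟩
    by_contra h
    push_neg at h
    have : c e ∈ c '' R := ⟨e, ⟨he, h.1⟩, rfl⟩
    rw [hemp] at this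
    exact this
  · refine ⟨a, fun e he => ?_⟩
    by_cases h0 : c e = 0
    · exact Or.inl h0
    · right
      by_contra hne
      have h1 : 1 < (c '' R).ncard := by
        rw [Set.one_lt_ncard (Set.toFinite _)]
        exact ⟨a, ha, c e, ⟨e, ⟨he, h0⟩, rfl⟩, fun h => hne h.symm⟩
      omega

lemma ge4 {m n : ℕ} (hm : 5 ≤ m) (c : Sym2 (Fin m ⊕ Fin n) → ℕ)
    (hpc : ProperlyConnected (completeBipartiteGraph (Fin m) (Fin n)) c) :
    4 ≤ numRecolored (completeBipartiteGraph (Fin m) (Fin n)) c +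
        numNewColors (completeBipartiteGraph (Fin m) (Fin n)) c := by
  by_contra hlt
  push_neg at hlt
  set R := {e | e ∈ (completeBipartiteGraph (Fin m) (Fin n)).edgeSet ∧ c e ≠ 0} with hR
  have hqp : numNewColors (completeBipartiteGraph (Fin m) (Fin n)) c ≤
      numRecolored (completeBipartiteGraph (Fin m) (Fin n)) c :=
    Set.ncard_image_le (Set.toFinite _)
  have hq1 : numNewColors (completeBipartiteGraph (Fin m) (Fin n)) c ≤ 1 := by omega
  have hp3 : R.ncard ≤ 3 := by
    have : numRecolored (completeBipartiteGraph (Fin m) (Fin n)) c = R.ncard := rfl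
    omega
  obtain ⟨a, hall⟩ := small_colors c hq1
  obtain ⟨u, v, hne, hus, hvs, huu, hvu⟩ :=
    exists_untouched_pair R (fun e he => he.1) true (by simp; omega)
  exact parity_contra c hpc a hall u v hne (hus.trans hvs.symm)
    (untouched_zero c huu) (untouched_zero c hvu)

lemma ge5 {m n : ℕ} (hm : 5 ≤ m) (hn : 4 ≤ n) (c : Sym2 (Fin m ⊕ Fin n) → ℕ)
    (hpc : ProperlyConnected (completeBipartiteGraph (Fin m) (Fin n)) c) :
    5 ≤ numRecolored (completeBipartiteGraph (Fin m) (Fin n)) c +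
        numNewColors (completeBipartiteGraph (Fin m) (Fin n)) c := by
  by_contra hlt
  push_neg at hlt
  set R := {e | e ∈ (completeBipartiteGraph (Fin m) (Fin n)).edgeSet ∧ c e ≠ 0} with hR
  have hpR : numRecolored (completeBipartiteGraph (Fin m) (Fin n)) c = R.ncard := rfl
  have hqp : numNewColors (completeBipartiteGraph (Fin m) (Fin n)) c ≤
      numRecolored (completeBipartiteGraph (Fin m) (Fin n)) c :=
    Set.ncard_image_le (Set.toFinite _)
  by_cases hq1 : numNewColors (completeBipartiteGraph (Fin m) (Fin n)) c ≤ 1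
  · -- q ≤ 1 : parity argument
    have hp3 : R.ncard ≤ 3 := by
      by_cases hq0 : numNewColors (completeBipartiteGraph (Fin m) (Fin n)) c = 0
      · have hemp : c '' R = ∅ := by
          rw [numNewColors] at hq0
          exact (Set.ncard_eq_zero (Set.toFinite _)).mp hq0
        have h0 : R = ∅ := Set.image_eq_empty.mp hemp
        rw [h0]
        simp
      · omega
    obtain ⟨a, hall⟩ := small_colors c hq1
    obtain ⟨u, v, hne, hus, hvs, huu, hvu⟩ :=
      exists_untouched_pair R (fun e he => he.1) true (by simp; omega)
    exact parity_contra c hpc a hall u v hne (hus.trans hvs.symm)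
      (untouched_zero c huu) (untouched_zero c hvu)
  · -- q = 2, p = 2
    push_neg at hq1
    have hq2 : numNewColors (completeBipartiteGraph (Fin m) (Fin n)) c = 2 := by omega
    have hp2 : R.ncard = 2 := by omega
    obtain ⟨e1, e2, he12, hReq⟩ := Set.ncard_eq_two.mp hp2
    have he1R : e1 ∈ R := by rw [hReq]; exact Set.mem_insert _ _
    have he2R : e2 ∈ R := by rw [hReq]; exact Set.mem_insert_of_mem _ rfl
    have ha : c e1 ≠ 0 := he1R.2
    have hb : c e2 ≠ 0 := he2R.2
    have hab : c e1 ≠ c e2 := by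
      intro h
      have : c '' R = {c e1} := by
        rw [hReq, Set.image_pair, ← h]
        simp
      rw [numNewColors, ← hR, this, Set.ncard_singleton] at hq2
      omega
    have hRdef : ∀ e ∈ (completeBipartiteGraph (Fin m) (Fin n)).edgeSet,
        c e ≠ 0 → e = e1 ∨ e = e2 := by
      intro e he hc0
      have : e ∈ R := ⟨he, hc0⟩
      rw [hReq] at this
      exact this
    obtain ⟨u, v, hneL, husL, hvsL, huuL, hvuL⟩ :=
      exists_untouched_pair R (fun e he => he.1) true (by simp; omega)
    obtain ⟨x, y, hneR, hxsR, hysR, hxuR, hyuR⟩ :=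
      exists_untouched_pair R (fun e he => he.1) false (by simp; omega)
    obtain ⟨pL, hL1, hL2, hL3⟩ := share_vertex c hpc e1 e2 hRdef ha hb hab u v hneL
      (husL.trans hvsL.symm) (untouched_zero c huuL) (untouched_zero c hvuL)
    obtain ⟨pR, hR1, hR2, hR3⟩ := share_vertex c hpc e1 e2 hRdef ha hb hab x y hneR
      (hxsR.trans hysR.symm) (untouched_zero c hxuR) (untouched_zero c hyuR)
    have hpne : pL ≠ pR := by
      intro h
      rw [h, hR3, hxsR] at hL3
      rw [husL] at hL3
      exact Bool.noConfusion hL3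
    have h1 : e1 = s(pL, pR) := (Sym2.mem_and_mem_iff hpne).mp ⟨hL1, hR1⟩
    have h2 : e2 = s(pL, pR) := (Sym2.mem_and_mem_iff hpne).mp ⟨hL2, hR2⟩
    exact he12 (h1.trans h2.symm)

lemma pw1 {V : Type*} {G : SimpleGraph V} (c : Sym2 V → ℕ) {u v : V} (h : G.Adj u v) :
    ∃ p : G.Walk u v, p.IsPath ∧ ProperWalk c p := by
  refine ⟨SimpleGraph.Walk.cons h SimpleGraph.Walk.nil, ?_, ?_⟩
  · rw [SimpleGraph.Walk.isPath_def]
    simp [h.ne]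
  · unfold ProperWalk
    simp [List.Chain']

lemma pw2 {V : Type*} {G : SimpleGraph V} (c : Sym2 V → ℕ) {u x v : V}
    (h1 : G.Adj u x) (h2 : G.Adj x v) (hne : u ≠ v)
    (hcol : c s(u, x) ≠ c s(x, v)) :
    ∃ p : G.Walk u v, p.IsPath ∧ ProperWalk c p := by
  refine ⟨SimpleGraph.Walk.cons h1 (SimpleGraph.Walk.cons h2 SimpleGraph.Walk.nil), ?_, ?_⟩
  · rw [SimpleGraph.Walk.isPath_def]
    simp [h1.ne, h2.ne, hne]
  · unfold ProperWalk
    simp [List.Chain', hcol]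

lemma pw4 {V : Type*} {G : SimpleGraph V} (c : Sym2 V → ℕ) {u x1 x2 x3 v : V}
    (h1 : G.Adj u x1) (h2 : G.Adj x1 x2) (h3 : G.Adj x2 x3) (h4 : G.Adj x3 v)
    (hnd : [u, x1, x2, x3, v].Nodup)
    (c1 : c s(u, x1) ≠ c s(x1, x2)) (c2 : c s(x1, x2) ≠ c s(x2, x3))
    (c3 : c s(x2, x3) ≠ c s(x3, v)) :
    ∃ p : G.Walk u v, p.IsPath ∧ ProperWalk c p := by
  refine ⟨SimpleGraph.Walk.cons h1 (SimpleGraph.Walk.cons h2 (SimpleGraph.Walk.cons h3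
    (SimpleGraph.Walk.cons h4 SimpleGraph.Walk.nil))), ?_, ?_⟩
  · rw [SimpleGraph.Walk.isPath_def]
    simpa using hnd
  · unfold ProperWalk
    simp [List.Chain', c1, c2, c3]

lemma upperA {m n : ℕ} (hm : 2 ≤ m) (hn : 2 ≤ n) (hn3 : n ≤ 3) :
    ∃ c, ProperlyConnected (completeBipartiteGraph (Fin m) (Fin n)) c ∧
      numRecolored (completeBipartiteGraph (Fin m) (Fin n)) c +
      numNewColors (completeBipartiteGraph (Fin m) (Fin n)) c = 4 := by
  set l1 : Fin m ⊕ Fin n := Sum.inl ⟨0, by omega⟩ with hl1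
  set r1 : Fin m ⊕ Fin n := Sum.inr ⟨0, by omega⟩ with hr1
  set r2 : Fin m ⊕ Fin n := Sum.inr ⟨1, by omega⟩ with hr2
  set c : Sym2 (Fin m ⊕ Fin n) → ℕ :=
    fun e => if e = s(l1, r1) then 1 else if e = s(l1, r2) then 2 else 0 with hc
  have hv1 : c s(l1, r1) = 1 := by simp [hc]
  have hv2 : c s(l1, r2) = 2 := by simp [hc, hl1, hr1, hr2, Sym2.eq_iff]
  have hgenL : ∀ (i : Fin m) (j : Fin n), Sum.inl i ≠ l1 →
      c s(Sum.inl i, Sum.inr j) = 0 := by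
    intro i j hi
    simp only [hc, hl1, hr1, hr2] at *
    rw [if_neg, if_neg] <;> rw [Sym2.eq_iff] <;> simp_all
  refine ⟨c, ?_, ?_⟩
  · rintro (i | j) (i' | j') hne
    · -- left-left
      by_cases hi : i = ⟨0, by omega⟩
      · subst hi
        refine pw2 c (x := r1) (by simp [hr1]) (by simp [hr1]) hne ?_
        have hi' : Sum.inl i' ≠ l1 := by rw [hl1]; exact Ne.symm hne
        rw [hv1, Sym2.eq_swap, hgenL i' ⟨0, by omega⟩ hi']
        simp
      · by_cases hi' : i' = ⟨0, by omega⟩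
        · subst hi'
          refine pw2 c (x := r1) (by simp [hr1]) (by simp [hr1]) hne ?_
          rw [hgenL i ⟨0, by omega⟩ (by simp [hl1, hi]), Sym2.eq_swap, hv1]
          simp
        · refine pw4 c (u := Sum.inl i) (x1 := r1) (x2 := l1) (x3 := r2) (v := Sum.inl i')
            (by simp [hr1]) (by simp [hr1, hl1]) (by simp [hl1, hr2]) (by simp [hr2]) ?_ ?_ ?_ ?_
          · have hii' : i ≠ i' := fun h => hne (congrArg Sum.inl h)
            have hi2 : ¬(⟨0, by omega⟩ : Fin m) = i := fun h => hi h.symm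
            have hi'2 : ¬(⟨0, by omega⟩ : Fin m) = i' := fun h => hi' h.symm
            simp [hl1, hr1, hr2, hi, hi', hii', hi2, hi'2]
          · rw [hgenL i ⟨0, by omega⟩ (by simp [hl1, hi]),
              show (s(r1,l1) : Sym2 (Fin m ⊕ Fin n)) = s(l1,r1) from Sym2.eq_swap, hv1]; simp
          · rw [show (s(r1,l1) : Sym2 (Fin m ⊕ Fin n)) = s(l1,r1) from Sym2.eq_swap, hv1, hv2]
            simp
          · rw [show (s(r2, Sum.inl i') : Sym2 (Fin m ⊕ Fin n)) = s(Sum.inl i', r2) from Sym2.eq_swap,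
              hv2, hgenL i' ⟨1, by omega⟩ (by simp [hl1, hi'])]; simp
    · exact pw1 c (by simp)
    · exact pw1 c (by simp)
    · -- right-right
      have hgenR : ∀ j : Fin n, ¬j.val = 0 → ¬j.val = 1 → c s(l1, Sum.inr j) = 0 := by
        intro j h0 h1
        simp only [hc]
        rw [if_neg, if_neg] <;> rw [Sym2.eq_iff] <;>
          simp [hl1, hr1, hr2, Fin.ext_iff, h0, h1]
      have val : ∀ a : Fin n, c s(l1, Sum.inr a) =
          if a.val = 0 then 1 else if a.val = 1 then 2 else 0 := by
        intro a
        rcases a with ⟨av, hav⟩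
        by_cases h0 : av = 0
        · subst h0
          rw [if_pos rfl]
          exact hv1
        · rw [if_neg h0]
          by_cases h1 : av = 1
          · subst h1
            rw [if_pos rfl]
            exact hv2
          · rw [if_neg h1]
            exact hgenR ⟨av, hav⟩ h0 h1
      refine pw2 c (x := l1) (by simp [hl1]) (by simp [hl1]) hne ?_
      have hjj : (j : Fin n).val ≠ (j' : Fin n).val := by
        intro h
        exact hne (congrArg Sum.inr (Fin.ext h))
      rw [show (s(Sum.inr j, l1) : Sym2 (Fin m ⊕ Fin n)) = s(l1, Sum.inr j) from Sym2.eq_swap,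
        val j, val j']
      have h3 : (j : Fin n).val < 3 := by omega
      have h3' : (j' : Fin n).val < 3 := by omega
      split_ifs <;> omega
  · have hRset : {e | e ∈ (completeBipartiteGraph (Fin m) (Fin n)).edgeSet ∧ c e ≠ 0} =
        {s(l1, r1), s(l1, r2)} := by
      ext e
      simp only [Set.mem_setOf_eq, Set.mem_insert_iff, Set.mem_singleton_iff]
      constructor
      · rintro ⟨he, hce⟩
        simp only [hc] at hce
        split_ifs at hce with h1 h2
        · exact Or.inl h1
        · exact Or.inr h2
        · exact absurd rfl hce
      · rintro (rfl | rfl)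
        · exact ⟨(SimpleGraph.mem_edgeSet _).mpr (by simp [hl1, hr1]), by rw [hv1]; simp⟩
        · exact ⟨(SimpleGraph.mem_edgeSet _).mpr (by simp [hl1, hr2]), by rw [hv2]; simp⟩
    have hne12 : s(l1, r1) ≠ s(l1, r2) := by
      simp [hl1, hr1, hr2, Sym2.eq_iff]
    rw [numRecolored, numNewColors, hRset, Set.image_pair, hv1, hv2,
      Set.ncard_pair hne12, Set.ncard_pair (by norm_num)]

lemma upperB {m n : ℕ} (hm : 2 ≤ m) (hn : 2 ≤ n) :
    ∃ c, ProperlyConnected (completeBipartiteGraph (Fin m) (Fin n)) c ∧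
      numRecolored (completeBipartiteGraph (Fin m) (Fin n)) c +
      numNewColors (completeBipartiteGraph (Fin m) (Fin n)) c = 5 := by
  set l1 : Fin m ⊕ Fin n := Sum.inl ⟨0, by omega⟩ with hl1
  set l2 : Fin m ⊕ Fin n := Sum.inl ⟨1, by omega⟩ with hl2
  set r1 : Fin m ⊕ Fin n := Sum.inr ⟨0, by omega⟩ with hr1
  set r2 : Fin m ⊕ Fin n := Sum.inr ⟨1, by omega⟩ with hr2
  set c : Sym2 (Fin m ⊕ Fin n) → ℕ :=
    fun e => if e = s(l1, r1) then 1 else if e = s(l1, r2) then 2 else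
      if e = s(l2, r1) then 2 else 0 with hc
  have hv1 : c s(l1, r1) = 1 := by simp [hc]
  have hv2 : c s(l1, r2) = 2 := by
    simp only [hc]
    rw [if_neg (by simp [hl1, hr1, hr2, Sym2.eq_iff, Fin.ext_iff])]
    simp
  have hv3 : c s(l2, r1) = 2 := by
    simp only [hc]
    rw [if_neg (by simp [hl1, hl2, hr1, Sym2.eq_iff, Fin.ext_iff]),
      if_neg (by simp [hl1, hl2, hr1, hr2, Sym2.eq_iff, Fin.ext_iff])]
    simp
  have hz : ∀ (i : Fin m) (j : Fin n), ¬(i.val = 0 ∧ j.val = 0) → ¬(i.val = 0 ∧ j.val = 1) →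
      ¬(i.val = 1 ∧ j.val = 0) → c s(Sum.inl i, Sum.inr j) = 0 := by
    intro i j h1 h2 h3
    simp only [hc]
    rw [if_neg, if_neg, if_neg] <;> rw [Sym2.eq_iff] <;>
      simp [hl1, hl2, hr1, hr2, Fin.ext_iff] <;> omega
  refine ⟨c, ?_, ?_⟩
  · rintro (i | j) (i' | j') hne
    · -- left-left
      rcases i with ⟨iv, hiv⟩; rcases i' with ⟨iv', hiv'⟩
      have hii' : iv ≠ iv' := by
        intro h; exact hne (by simp [h])
      by_cases h0 : iv = 0
      · subst h0
        refine pw2 c (x := r1) (by simp [hr1]) (by simp [hr1]) hne ?_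
        by_cases h1' : iv' = 1
        · subst h1'
          have : c s(l1, r1) ≠ c s(r1, l2) := by
            rw [hv1, show (s(r1,l2) : Sym2 (Fin m ⊕ Fin n)) = s(l2,r1) from Sym2.eq_swap, hv3]
            norm_num
          exact this
        · have : c s(r1, Sum.inl ⟨iv', hiv'⟩) = 0 := by
            rw [show (s(r1, Sum.inl ⟨iv', hiv'⟩) : Sym2 (Fin m ⊕ Fin n)) =
              s(Sum.inl ⟨iv', hiv'⟩, r1) from Sym2.eq_swap, hr1]
            exact hz _ _ (by simp; omega) (by simp) (by simp; omega)
          rw [this]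
          have : c s(l1, r1) = 1 := hv1
          exact by rw [this]; norm_num
      · by_cases h1 : iv = 1
        · subst h1
          by_cases h0' : iv' = 0
          · subst h0'
            refine pw2 c (x := r1) (by simp [hr1]) (by simp [hr1]) hne ?_
            have : c s(l2, r1) ≠ c s(r1, l1) := by
              rw [hv3, show (s(r1,l1) : Sym2 (Fin m ⊕ Fin n)) = s(l1,r1) from Sym2.eq_swap, hv1]
              norm_num
            exact this
          · refine pw4 c (x1 := r1) (x2 := l1) (x3 := r2)
              (by simp [hr1]) (by simp [hr1, hl1]) (by simp [hl1, hr2]) (by simp [hr2]) ?_ ?_ ?_ ?_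
            · simp [hl1, hr1, hr2, Fin.ext_iff]
              omega
            · have : c s(l2, r1) ≠ c s(r1, l1) := by
                rw [hv3, show (s(r1,l1) : Sym2 (Fin m ⊕ Fin n)) = s(l1,r1) from Sym2.eq_swap, hv1]
                norm_num
              exact this
            · have : c s(r1, l1) ≠ c s(l1, r2) := by
                rw [show (s(r1,l1) : Sym2 (Fin m ⊕ Fin n)) = s(l1,r1) from Sym2.eq_swap, hv1, hv2]
                norm_num
              exact this
            · have h4 : c s(r2, Sum.inl ⟨iv', hiv'⟩) = 0 := by
                rw [show (s(r2, Sum.inl ⟨iv', hiv'⟩) : Sym2 (Fin m ⊕ Fin n)) =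
                  s(Sum.inl ⟨iv', hiv'⟩, r2) from Sym2.eq_swap, hr2]
                exact hz _ _ (by simp) (by simp; omega) (by simp)
              rw [h4]
              have h5 : c s(l1, r2) = 2 := hv2
              exact by rw [h5]; norm_num
        · -- iv ∉ {0,1}
          by_cases h0' : iv' = 0
          · subst h0'
            refine pw2 c (x := r1) (by simp [hr1]) (by simp [hr1]) hne ?_
            have hLz : c s(Sum.inl ⟨iv, hiv⟩, r1) = 0 := by
              rw [hr1]
              exact hz _ _ (by simp; omega) (by simp) (by simp; omega)
            rw [hLz]
            have : c s(r1, l1) = 1 := by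
              rw [show (s(r1,l1) : Sym2 (Fin m ⊕ Fin n)) = s(l1,r1) from Sym2.eq_swap, hv1]
            rw [this]; norm_num
          · by_cases h1' : iv' = 1
            · subst h1'
              refine pw4 c (x1 := r2) (x2 := l1) (x3 := r1)
                (by simp [hr2]) (by simp [hr2, hl1]) (by simp [hl1, hr1]) (by simp [hr1]) ?_ ?_ ?_ ?_
              · simp [hl1, hr1, hr2, Fin.ext_iff]
                omega
              · have hLz : c s(Sum.inl ⟨iv, hiv⟩, r2) = 0 := by
                  rw [hr2]
                  exact hz _ _ (by simp) (by simp; omega) (by simp)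
                rw [hLz]
                have : c s(r2, l1) = 2 := by
                  rw [show (s(r2,l1) : Sym2 (Fin m ⊕ Fin n)) = s(l1,r2) from Sym2.eq_swap, hv2]
                rw [this]; norm_num
              · have : c s(r2, l1) ≠ c s(l1, r1) := by
                  rw [show (s(r2,l1) : Sym2 (Fin m ⊕ Fin n)) = s(l1,r2) from Sym2.eq_swap, hv2, hv1]
                  norm_num
                exact this
              · have : c s(l1, r1) ≠ c s(r1, l2) := by
                  rw [hv1, show (s(r1,l2) : Sym2 (Fin m ⊕ Fin n)) = s(l2,r1) from Sym2.eq_swap, hv3]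
                  norm_num
                exact this
            · refine pw4 c (x1 := r1) (x2 := l1) (x3 := r2)
                (by simp [hr1]) (by simp [hr1, hl1]) (by simp [hl1, hr2]) (by simp [hr2]) ?_ ?_ ?_ ?_
              · simp [hl1, hr1, hr2, Fin.ext_iff]
                omega
              · have hLz : c s(Sum.inl ⟨iv, hiv⟩, r1) = 0 := by
                  rw [hr1]
                  exact hz _ _ (by simp; omega) (by simp) (by simp; omega)
                rw [hLz]
                have : c s(r1, l1) = 1 := by
                  rw [show (s(r1,l1) : Sym2 (Fin m ⊕ Fin n)) = s(l1,r1) from Sym2.eq_swap, hv1]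
                rw [this]; norm_num
              · have : c s(r1, l1) ≠ c s(l1, r2) := by
                  rw [show (s(r1,l1) : Sym2 (Fin m ⊕ Fin n)) = s(l1,r1) from Sym2.eq_swap, hv1, hv2]
                  norm_num
                exact this
              · have h4 : c s(r2, Sum.inl ⟨iv', hiv'⟩) = 0 := by
                  rw [show (s(r2, Sum.inl ⟨iv', hiv'⟩) : Sym2 (Fin m ⊕ Fin n)) =
                    s(Sum.inl ⟨iv', hiv'⟩, r2) from Sym2.eq_swap, hr2]
                  exact hz _ _ (by simp) (by simp; omega) (by simp)
                rw [h4, hv2]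
                norm_num
    · exact pw1 c (by simp)
    · exact pw1 c (by simp)
    · -- right-right
      rcases j with ⟨jv, hjv⟩; rcases j' with ⟨jv', hjv'⟩
      have hjj' : jv ≠ jv' := by
        intro h; exact hne (by simp [h])
      by_cases h0 : jv = 0
      · subst h0
        refine pw2 c (x := l1) (by simp [hl1]) (by simp [hl1]) hne ?_
        by_cases h1' : jv' = 1
        · subst h1'
          have : c s(r1, l1) ≠ c s(l1, r2) := by
            rw [show (s(r1,l1) : Sym2 (Fin m ⊕ Fin n)) = s(l1,r1) from Sym2.eq_swap, hv1, hv2]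
            norm_num
          exact this
        · have hRz : c s(l1, Sum.inr ⟨jv', hjv'⟩) = 0 := by
            rw [hl1]
            exact hz _ _ (by simp; omega) (by simp; omega) (by simp)
          rw [hRz]
          have : c s(r1, l1) = 1 := by
            rw [show (s(r1,l1) : Sym2 (Fin m ⊕ Fin n)) = s(l1,r1) from Sym2.eq_swap, hv1]
          rw [this]; norm_num
      · by_cases h1 : jv = 1
        · subst h1
          by_cases h0' : jv' = 0
          · subst h0'
            refine pw2 c (x := l1) (by simp [hl1]) (by simp [hl1]) hne ?_
            have : c s(r2, l1) ≠ c s(l1, r1) := by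
              rw [show (s(r2,l1) : Sym2 (Fin m ⊕ Fin n)) = s(l1,r2) from Sym2.eq_swap, hv2, hv1]
              norm_num
            exact this
          · refine pw4 c (x1 := l1) (x2 := r1) (x3 := l2)
              (by simp [hl1]) (by simp [hl1, hr1]) (by simp [hr1, hl2]) (by simp [hl2]) ?_ ?_ ?_ ?_
            · simp [hl1, hl2, hr1, hr2, Fin.ext_iff]
              omega
            · have : c s(r2, l1) ≠ c s(l1, r1) := by
                rw [show (s(r2,l1) : Sym2 (Fin m ⊕ Fin n)) = s(l1,r2) from Sym2.eq_swap, hv2, hv1]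
                norm_num
              exact this
            · have : c s(l1, r1) ≠ c s(r1, l2) := by
                rw [hv1, show (s(r1,l2) : Sym2 (Fin m ⊕ Fin n)) = s(l2,r1) from Sym2.eq_swap, hv3]
                norm_num
              exact this
            · have h4 : c s(l2, Sum.inr ⟨jv', hjv'⟩) = 0 := by
                rw [hl2]
                exact hz _ _ (by simp) (by simp) (by simp; omega)
              rw [h4]
              have : c s(r1, l2) = 2 := by
                rw [show (s(r1,l2) : Sym2 (Fin m ⊕ Fin n)) = s(l2,r1) from Sym2.eq_swap, hv3]
              rw [this]; norm_num
        · -- jv ∉ {0,1}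
          by_cases h0' : jv' = 0
          · subst h0'
            refine pw2 c (x := l1) (by simp [hl1]) (by simp [hl1]) hne ?_
            have hRz : c s(Sum.inr ⟨jv, hjv⟩, l1) = 0 := by
              rw [show (s(Sum.inr ⟨jv, hjv⟩, l1) : Sym2 (Fin m ⊕ Fin n)) =
                s(l1, Sum.inr ⟨jv, hjv⟩) from Sym2.eq_swap, hl1]
              exact hz _ _ (by simp; omega) (by simp; omega) (by simp)
            rw [hRz, hv1]
            norm_num
          · by_cases h1' : jv' = 1
            · subst h1'
              refine pw4 c (x1 := l2) (x2 := r1) (x3 := l1)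
                (by simp [hl2]) (by simp [hl2, hr1]) (by simp [hr1, hl1]) (by simp [hl1]) ?_ ?_ ?_ ?_
              · simp [hl1, hl2, hr1, hr2, Fin.ext_iff]
                omega
              · have hRz : c s(Sum.inr ⟨jv, hjv⟩, l2) = 0 := by
                  rw [show (s(Sum.inr ⟨jv, hjv⟩, l2) : Sym2 (Fin m ⊕ Fin n)) =
                    s(l2, Sum.inr ⟨jv, hjv⟩) from Sym2.eq_swap, hl2]
                  exact hz _ _ (by simp) (by simp) (by simp; omega)
                rw [hRz, hv3]
                norm_num
              · have : c s(l2, r1) ≠ c s(r1, l1) := by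
                  rw [hv3, show (s(r1,l1) : Sym2 (Fin m ⊕ Fin n)) = s(l1,r1) from Sym2.eq_swap, hv1]
                  norm_num
                exact this
              · have : c s(r1, l1) ≠ c s(l1, r2) := by
                  rw [show (s(r1,l1) : Sym2 (Fin m ⊕ Fin n)) = s(l1,r1) from Sym2.eq_swap, hv1, hv2]
                  norm_num
                exact this
            · refine pw4 c (x1 := l1) (x2 := r1) (x3 := l2)
                (by simp [hl1]) (by simp [hl1, hr1]) (by simp [hr1, hl2]) (by simp [hl2]) ?_ ?_ ?_ ?_
              · simp [hl1, hl2, hr1, hr2, Fin.ext_iff]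
                omega
              · have hRz : c s(Sum.inr ⟨jv, hjv⟩, l1) = 0 := by
                  rw [show (s(Sum.inr ⟨jv, hjv⟩, l1) : Sym2 (Fin m ⊕ Fin n)) =
                    s(l1, Sum.inr ⟨jv, hjv⟩) from Sym2.eq_swap, hl1]
                  exact hz _ _ (by simp; omega) (by simp; omega) (by simp)
                rw [hRz, hv1]
                norm_num
              · have : c s(l1, r1) ≠ c s(r1, l2) := by
                  rw [hv1, show (s(r1,l2) : Sym2 (Fin m ⊕ Fin n)) = s(l2,r1) from Sym2.eq_swap, hv3]
                  norm_num
                exact this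
              · have h4 : c s(l2, Sum.inr ⟨jv', hjv'⟩) = 0 := by
                  rw [hl2]
                  exact hz _ _ (by simp) (by simp) (by simp; omega)
                rw [h4]
                have : c s(r1, l2) = 2 := by
                  rw [show (s(r1,l2) : Sym2 (Fin m ⊕ Fin n)) = s(l2,r1) from Sym2.eq_swap, hv3]
                rw [this]; norm_num
  · -- counting
    have hRset : {e | e ∈ (completeBipartiteGraph (Fin m) (Fin n)).edgeSet ∧ c e ≠ 0} =
        {s(l1, r1), s(l1, r2), s(l2, r1)} := by
      ext e
      simp only [Set.mem_setOf_eq, Set.mem_insert_iff, Set.mem_singleton_iff]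
      constructor
      · rintro ⟨he, hce⟩
        simp only [hc] at hce
        split_ifs at hce with ha hb hcc
        · exact Or.inl ha
        · exact Or.inr (Or.inl hb)
        · exact Or.inr (Or.inr hcc)
        · exact absurd rfl hce
      · rintro (rfl | rfl | rfl)
        · exact ⟨(SimpleGraph.mem_edgeSet _).mpr (by simp [hl1, hr1]), by rw [hv1]; norm_num⟩
        · exact ⟨(SimpleGraph.mem_edgeSet _).mpr (by simp [hl1, hr2]), by rw [hv2]; norm_num⟩
        · exact ⟨(SimpleGraph.mem_edgeSet _).mpr (by simp [hl2, hr1]), by rw [hv3]; norm_num⟩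
    have hne12 : s(l1, r1) ≠ s(l1, r2) := by simp [hl1, hr1, hr2, Sym2.eq_iff, Fin.ext_iff]
    have hne13 : s(l1, r1) ≠ s(l2, r1) := by simp [hl1, hl2, hr1, Sym2.eq_iff, Fin.ext_iff]
    have hne23 : s(l1, r2) ≠ s(l2, r1) := by simp [hl1, hl2, hr1, hr2, Sym2.eq_iff, Fin.ext_iff]
    have hcard : ({s(l1, r1), s(l1, r2), s(l2, r1)} : Set (Sym2 (Fin m ⊕ Fin n))).ncard = 3 := by
      rw [Set.ncard_insert_of_notMem (by simp [hne12, hne13]) (Set.toFinite _),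
        Set.ncard_pair hne23]
    have himg : c '' {s(l1, r1), s(l1, r2), s(l2, r1)} = {1, 2} := by
      rw [Set.image_insert_eq, Set.image_pair, hv1, hv2, hv3]
      ext x
      simp
    rw [numRecolored, numNewColors, hRset, hcard, himg, Set.ncard_pair (by norm_num)]

theorem stmt9 (m n : ℕ) (hmn : n ≤ m) (hn : 2 ≤ n) (h9 : 9 ≤ m + n) :
    (n ≤ 3 → pcOpt (completeBipartiteGraph (Fin m) (Fin n)) = 4) ∧
    (4 ≤ n → pcOpt (completeBipartiteGraph (Fin m) (Fin n)) = 5) := by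
  have hm5 : 5 ≤ m := by omega
  constructor
  · intro hn3
    obtain ⟨c, hpc, hcnt⟩ := upperA (m := m) (n := n) (by omega) hn hn3
    simp only [pcOpt]
    apply le_antisymm
    · exact Nat.sInf_le ⟨c, hpc, hcnt.symm⟩
    · refine le_csInf ⟨4, c, hpc, hcnt.symm⟩ ?_
      rintro b ⟨c', hpc', rfl⟩
      exact ge4 hm5 c' hpc'
  · intro hn4
    obtain ⟨c, hpc, hcnt⟩ := upperB (m := m) (n := n) (by omega) hn
    simp only [pcOpt]
    apply le_antisymm
    · exact Nat.sInf_le ⟨c, hpc, hcnt.symm⟩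
    · refine le_csInf ⟨5, c, hpc, hcnt.symm⟩ ?_
      rintro b ⟨c', hpc', rfl⟩
      exact ge5 hm5 hn4 c' hpc'
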